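/- Let Ω ⊆ ℝ² be a bounded open convex set and f : Ω → ℝ positive. Assume the Monge–Ampère Dirichlet problem det[D²u] = f in Ω, u = 0 on ∂Ω, has at most one convex C² solution, and let u_I be such a solution. Suppose g₁, g₂ : Ω → ℝ are nonnegative functions and v₁, v₂ : Ω → ℝ are C² functions with Δvᵢ = 2√f + gᵢ in Ω, vᵢ = 0 on ∂Ω, and det[D²vᵢ] = f in Ω, for i = 1, 2. Then v₁ = v₂ = u_I and g₁ = g₂ = Δu_I − 2√f on Ω. -/

import Mathlib

open Real

/-- The Hessian matrix of `u : ℝ² → ℝ` at `x`. -/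
noncomputable def Hess (u : EuclideanSpace ℝ (Fin 2) → ℝ)
    (x : EuclideanSpace ℝ (Fin 2)) : Matrix (Fin 2) (Fin 2) ℝ :=
  Matrix.of fun i j =>
    fderiv ℝ (fun y => fderiv ℝ u y (EuclideanSpace.single j (1:ℝ))) x
      (EuclideanSpace.single i (1:ℝ))

/-- `u` is a convex `C²` solution of the Monge–Ampère Dirichlet problem
`det D²u = f` in `Ω`, `u = 0` on `∂Ω`. -/
def IsMASol (Ω : Set (EuclideanSpace ℝ (Fin 2)))
    (f u : EuclideanSpace ℝ (Fin 2) → ℝ) : Prop :=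
  ContDiffOn ℝ 2 u Ω ∧ ConvexOn ℝ Ω u ∧
    (∀ x ∈ Ω, (Hess u x).det = f x) ∧ (∀ x ∈ frontier Ω, u x = 0)

lemma key (a b c d0 d1 : ℝ) (h1 : 0 < a + c) (h2 : 0 < a*c - b*b) :
    0 ≤ d0*d0*a + d0*d1*b + d1*d0*b + d1*d1*c := by
  have ha : 0 < a := by
    rcases le_or_gt a 0 with h | h
    · nlinarith [sq_nonneg b, mul_nonneg (neg_nonneg.mpr h) (by nlinarith : (0:ℝ) ≤ c)]
    · exact h
  nlinarith [sq_nonneg (a*d0 + b*d1), mul_pos ha ha, sq_nonneg d1]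

noncomputable abbrev E2 := EuclideanSpace ℝ (Fin 2)

lemma hess_apply (u : E2 → ℝ) (x : E2) (hd : DifferentiableAt ℝ (fderiv ℝ u) x) (i j : Fin 2) :
    Hess u x i j = fderiv ℝ (fderiv ℝ u) x (EuclideanSpace.single i 1) (EuclideanSpace.single j 1) := by
  have h : fderiv ℝ (fun y => fderiv ℝ u y (EuclideanSpace.single j (1:ℝ))) x
      = (fderiv ℝ (fderiv ℝ u) x).flip (EuclideanSpace.single j 1) := by
    rw [show (fun y => fderiv ℝ u y (EuclideanSpace.single j (1:ℝ)))
        = fun y => (fderiv ℝ u y) ((fun _ => EuclideanSpace.single j (1:ℝ)) y) from rfl,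
      fderiv_clm_apply hd (differentiableAt_const _)]
    simp
  simp [Hess, h]

lemma quad_nonneg (u : E2 → ℝ) (x : E2) (hx : ContDiffAt ℝ 2 u x)
    (hd : DifferentiableAt ℝ (fderiv ℝ u) x)
    (htr : 0 < (Hess u x).trace) (hdet : 0 < (Hess u x).det) (d : E2) :
    0 ≤ fderiv ℝ (fderiv ℝ u) x d d := by
  set B := fderiv ℝ (fderiv ℝ u) x with hB
  have hsym : B (EuclideanSpace.single 0 1) (EuclideanSpace.single 1 1)
      = B (EuclideanSpace.single 1 1) (EuclideanSpace.single 0 1) :=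
    (hx.isSymmSndFDerivAt (by norm_num)) _ _
  have hdec : d = d 0 • EuclideanSpace.single 0 (1:ℝ) + d 1 • EuclideanSpace.single 1 (1:ℝ) := by
    ext i; fin_cases i <;> simp [EuclideanSpace.single_apply]
  have hexp : B d d = d 0 * d 0 * (Hess u x 0 0) + d 0 * d 1 * (Hess u x 0 1)
      + d 1 * d 0 * (Hess u x 1 0) + d 1 * d 1 * (Hess u x 1 1) := by
    rw [hess_apply u x hd, hess_apply u x hd, hess_apply u x hd, hess_apply u x hd]
    conv_lhs => rw [hdec]
    simp [ContinuousLinearMap.map_add, ContinuousLinearMap.map_smul]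
    ring
  have htr' : Hess u x 0 0 + Hess u x 1 1 > 0 := by
    have := htr; rwa [Matrix.trace_fin_two] at this
  have hdet' : Hess u x 0 0 * Hess u x 1 1 - Hess u x 0 1 * Hess u x 1 0 > 0 := by
    have := hdet; rwa [Matrix.det_fin_two] at this
  have hsym' : Hess u x 0 1 = Hess u x 1 0 := by
    rw [hess_apply u x hd, hess_apply u x hd]; exact hsym
  rw [hexp, hsym']
  rw [hsym'] at hdet'
  exact key _ _ _ _ _ htr' hdet'

lemma convexOn_of_hess_pos (Ω : Set E2) (hΩo : IsOpen Ω) (hΩc : Convex ℝ Ω)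
    (u : E2 → ℝ) (hu : ContDiffOn ℝ 2 u Ω)
    (htr : ∀ x ∈ Ω, 0 < (Hess u x).trace) (hdet : ∀ x ∈ Ω, 0 < (Hess u x).det) :
    ConvexOn ℝ Ω u := by
  have hCA : ∀ x ∈ Ω, ContDiffAt ℝ 2 u x := fun x hx => hu.contDiffAt (hΩo.mem_nhds hx)
  have hd : ∀ x ∈ Ω, DifferentiableAt ℝ (fderiv ℝ u) x := fun x hx =>
    ((hCA x hx).fderiv_right (m := 1) (by norm_num)).differentiableAt (by norm_num)
  have hdu : ∀ x ∈ Ω, DifferentiableAt ℝ u x := fun x hx =>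
    (hCA x hx).differentiableAt (by norm_num)
  refine ⟨hΩc, ?_⟩
  intro x hx y hy a b ha hb hab
  set d := y - x with hdd
  set L : ℝ → E2 := fun t => x + t • d with hL
  have hLmem : ∀ t ∈ Set.Icc (0:ℝ) 1, L t ∈ Ω := fun t ht =>
    hΩc.add_smul_sub_mem hx hy ht
  set S : Set ℝ := L ⁻¹' Ω with hS
  have hScont : Continuous L := by fun_prop
  have hSopen : IsOpen S := hΩo.preimage hScont
  have hIS : Set.Icc (0:ℝ) 1 ⊆ S := fun t ht => hLmem t ht
  have hLd : ∀ t : ℝ, HasDerivAt L d t := by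
    intro t
    simpa [hL] using ((hasDerivAt_id t).smul_const d).const_add x
  set ψ : ℝ → ℝ := fun t => fderiv ℝ u (L t) d with hψ
  have hφ' : ∀ t ∈ S, HasDerivAt (u ∘ L) (ψ t) t := by
    intro t ht
    exact ((hdu (L t) ht).hasFDerivAt).comp_hasDerivAt t (hLd t)
  have hψ' : ∀ t ∈ S, HasDerivAt ψ (fderiv ℝ (fderiv ℝ u) (L t) d d) t := by
    intro t ht
    have h1 : HasDerivAt (fun s => fderiv ℝ u (L s)) (fderiv ℝ (fderiv ℝ u) (L t) d) t :=
      ((hd (L t) ht).hasFDerivAt).comp_hasDerivAt t (hLd t)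
    exact ((ContinuousLinearMap.apply ℝ ℝ d).hasFDerivAt).comp_hasDerivAt t h1
  have hderiv_eq : ∀ t ∈ S, deriv (u ∘ L) t = ψ t := fun t ht => (hφ' t ht).deriv
  have hconv : ConvexOn ℝ (Set.Icc (0:ℝ) 1) (u ∘ L) := by
    apply convexOn_of_deriv2_nonneg (convex_Icc 0 1)
    · exact fun t ht => ((hφ' t (hIS ht)).continuousAt).continuousWithinAt
    · intro t ht
      have ht' : t ∈ S := hIS (interior_subset ht)
      exact ((hφ' t ht').differentiableAt).differentiableWithinAt
    · intro t ht
      have ht' : t ∈ S := hIS (interior_subset ht)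
      have heq : deriv (u ∘ L) =ᶠ[nhds t] ψ :=
        Filter.eventuallyEq_of_mem (hSopen.mem_nhds ht') hderiv_eq
      exact (heq.differentiableAt_iff.mpr (hψ' t ht').differentiableAt).differentiableWithinAt
    · intro t ht
      have ht' : t ∈ S := hIS (Set.mem_of_mem_of_subset (interior_subset ht) (le_refl _))
      have heq : deriv (u ∘ L) =ᶠ[nhds t] ψ :=
        Filter.eventuallyEq_of_mem (hSopen.mem_nhds ht') hderiv_eq
      show 0 ≤ deriv (deriv (u ∘ L)) t
      rw [heq.deriv_eq, (hψ' t ht').deriv]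
      exact quad_nonneg u (L t) (hCA _ ht') (hd _ ht') (htr _ ht') (hdet _ ht') d
  have h0 : L 0 = x := by simp [hL]
  have h1 : L 1 = y := by simp [hL, hdd]
  have hkey := hconv.2 (Set.left_mem_Icc.2 zero_le_one) (Set.right_mem_Icc.2 zero_le_one) ha hb hab
  have hb' : a = 1 - b := by linarith
  have hLab : L b = a • x + b • y := by
    rw [hb']
    show x + b • (y - x) = (1 - b) • x + b • y
    module
  have hgoal : u (L b) ≤ a * u x + b * u y := by simpa [Function.comp, h0, h1] using hkey
  rw [hLab] at hgoal
  simpa using hgoal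

lemma hess_congr (Ω : Set E2) (hΩo : IsOpen Ω) {v u : E2 → ℝ} (h : Set.EqOn v u Ω)
    {x : E2} (hx : x ∈ Ω) : Hess v x = Hess u x := by
  have hfd : ∀ y ∈ Ω, fderiv ℝ v y = fderiv ℝ u y := fun y hy =>
    (Filter.eventuallyEq_of_mem (hΩo.mem_nhds hy) h).fderiv_eq
  ext i j
  show fderiv ℝ (fun y => fderiv ℝ v y (EuclideanSpace.single j (1:ℝ))) x _
      = fderiv ℝ (fun y => fderiv ℝ u y (EuclideanSpace.single j (1:ℝ))) x _
  have hin : (fun y => fderiv ℝ v y (EuclideanSpace.single j (1:ℝ)))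
      =ᶠ[nhds x] (fun y => fderiv ℝ u y (EuclideanSpace.single j (1:ℝ))) :=
    Filter.eventuallyEq_of_mem (hΩo.mem_nhds hx) (fun y hy => by rw [hfd y hy])
  rw [hin.fderiv_eq]

/-- Uniqueness in Theorem 2.1: assuming the Monge–Ampère Dirichlet problem has at
most one convex `C²` solution `u_I`, if `v₁, v₂` are `C²` functions solving the
Poisson problems `Δvᵢ = 2√f + gᵢ` in `Ω`, `vᵢ = 0` on `∂Ω`, with nonnegative `gᵢ`
and `det D²vᵢ = f` in `Ω`, then `v₁ = v₂ = u_I` and `g₁ = g₂ = Δu_I − 2√f` on `Ω`. -/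
theorem poisson_reformulation_unique
    (Ω : Set (EuclideanSpace ℝ (Fin 2))) (hΩo : IsOpen Ω) (hΩc : Convex ℝ Ω)
    (hΩb : Bornology.IsBounded Ω)
    (f uI : EuclideanSpace ℝ (Fin 2) → ℝ)
    (hf : ∀ x ∈ Ω, 0 < f x)
    (huniq : ∀ u v : EuclideanSpace ℝ (Fin 2) → ℝ,
      IsMASol Ω f u → IsMASol Ω f v → Set.EqOn u v Ω)
    (huI : IsMASol Ω f uI)
    (g₁ g₂ v₁ v₂ : EuclideanSpace ℝ (Fin 2) → ℝ)
    (hg₁ : ∀ x ∈ Ω, 0 ≤ g₁ x) (hg₂ : ∀ x ∈ Ω, 0 ≤ g₂ x)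
    (hv₁C : ContDiffOn ℝ 2 v₁ Ω) (hv₂C : ContDiffOn ℝ 2 v₂ Ω)
    (hv₁Δ : ∀ x ∈ Ω, (Hess v₁ x).trace = 2 * Real.sqrt (f x) + g₁ x)
    (hv₂Δ : ∀ x ∈ Ω, (Hess v₂ x).trace = 2 * Real.sqrt (f x) + g₂ x)
    (hv₁bd : ∀ x ∈ frontier Ω, v₁ x = 0) (hv₂bd : ∀ x ∈ frontier Ω, v₂ x = 0)
    (hv₁det : ∀ x ∈ Ω, (Hess v₁ x).det = f x)
    (hv₂det : ∀ x ∈ Ω, (Hess v₂ x).det = f x) :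
    Set.EqOn v₁ uI Ω ∧ Set.EqOn v₂ uI Ω ∧
    (∀ x ∈ Ω, g₁ x = (Hess uI x).trace - 2 * Real.sqrt (f x)) ∧
    (∀ x ∈ Ω, g₂ x = (Hess uI x).trace - 2 * Real.sqrt (f x)) := by
  have hconv : ∀ (v g : EuclideanSpace ℝ (Fin 2) → ℝ), ContDiffOn ℝ 2 v Ω →
      (∀ x ∈ Ω, 0 ≤ g x) → (∀ x ∈ Ω, (Hess v x).trace = 2 * Real.sqrt (f x) + g x) →
      (∀ x ∈ Ω, (Hess v x).det = f x) → ConvexOn ℝ Ω v := by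
    intro v g hC hg hΔ hdet
    apply convexOn_of_hess_pos Ω hΩo hΩc v hC
    · intro x hx
      rw [hΔ x hx]
      have := Real.sqrt_pos.mpr (hf x hx)
      linarith [hg x hx]
    · intro x hx
      rw [hdet x hx]; exact hf x hx
  have hMA1 : IsMASol Ω f v₁ := ⟨hv₁C, hconv v₁ g₁ hv₁C hg₁ hv₁Δ hv₁det, hv₁det, hv₁bd⟩
  have hMA2 : IsMASol Ω f v₂ := ⟨hv₂C, hconv v₂ g₂ hv₂C hg₂ hv₂Δ hv₂det, hv₂det, hv₂bd⟩
  have e1 := huniq v₁ uI hMA1 huI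
  have e2 := huniq v₂ uI hMA2 huI
  refine ⟨e1, e2, fun x hx => ?_, fun x hx => ?_⟩
  · rw [← hess_congr Ω hΩo e1 hx]
    have := hv₁Δ x hx; linarith
  · rw [← hess_congr Ω hΩo e2 hx]
    have := hv₂Δ x hx; linarith
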